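/- Let 1 < α ≤ 2, let M ≥ 2 be an integer, and let C be the (M−1)×(M−1) Toeplitz matrix with entries C_{ij} = c_{i−j}^(α), where c_k^(α) are the fractional centered difference coefficients. Then C is a real symmetric positive definite matrix. -/

import Mathlib

/-- The fractional centered difference coefficients
`c_k^(α) = (−1)^k Γ(α+1) / (Γ(α/2 − k + 1) Γ(α/2 + k + 1))`,
interpreted as `0` when one of the Gamma arguments is a nonpositive integer. -/
noncomputable def fracCoeff (α : ℝ) (k : ℤ) : ℝ :=
  (-1 : ℝ) ^ k * Real.Gamma (α + 1) /
    (Real.Gamma (α / 2 - k + 1) * Real.Gamma (α / 2 + k + 1))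


-- sign of Gamma on negative axis
lemma gamma_sign {a : ℝ} (h0 : 0 < a) (h1 : a < 1) (n : ℕ) :
    0 < (-1 : ℝ) ^ n * Real.Gamma (a - n) := by
  induction n with
  | zero => simpa using Real.Gamma_pos_of_pos h0
  | succ n ih =>
    have hne : a - (n + 1 : ℕ) ≠ 0 := by push_cast; intro h; nlinarith
    have hrec : Real.Gamma (a - n) = (a - (n+1:ℕ)) * Real.Gamma (a - (n+1:ℕ)) := by
      have : (a : ℝ) - n = (a - (n+1:ℕ)) + 1 := by push_cast; ring
      rw [this, Real.Gamma_add_one hne]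
    have hlt : a - ((n:ℝ) + 1) < 0 := by nlinarith [Nat.cast_nonneg (α := ℝ) n]
    rw [hrec] at ih
    have := ih
    push_cast at this ⊢
    rw [pow_succ]
    nlinarith [this]

lemma fracCoeff_symm (α : ℝ) (k : ℤ) : fracCoeff α (-k) = fracCoeff α k := by
  unfold fracCoeff
  have h1 : (-1 : ℝ) ^ (-k) = (-1 : ℝ) ^ k := by
    rw [zpow_neg]
    rcases Int.even_or_odd k with h | h
    · rw [h.neg_one_zpow]; norm_num
    · rw [Odd.neg_one_zpow h]; norm_num
  rw [h1]
  push_cast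
  ring_nf

lemma fracCoeff_nat (α : ℝ) (n : ℕ) :
    fracCoeff α n = (-1 : ℝ) ^ n * Real.Gamma (α + 1) /
      (Real.Gamma (α / 2 - n + 1) * Real.Gamma (α / 2 + n + 1)) := by
  unfold fracCoeff
  push_cast
  rw [zpow_natCast]

lemma fracCoeff_zero_pos {α : ℝ} (hα1 : 1 < α) : 0 < fracCoeff α 0 := by
  have h : fracCoeff α 0 = Real.Gamma (α + 1) / (Real.Gamma (α / 2 + 1) * Real.Gamma (α / 2 + 1)) := by
    unfold fracCoeff; norm_num
  rw [h]
  have h1 : 0 < Real.Gamma (α + 1) := Real.Gamma_pos_of_pos (by linarith)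
  have h2 : 0 < Real.Gamma (α / 2 + 1) := Real.Gamma_pos_of_pos (by linarith)
  positivity

lemma fracCoeff_succ_neg {α : ℝ} (hα1 : 1 < α) (hα2 : α < 2) (n : ℕ) :
    fracCoeff α ((n : ℤ) + 1) < 0 := by
  have ha0 : 0 < α / 2 := by linarith
  have ha1 : α / 2 < 1 := by linarith
  have hkey := gamma_sign ha0 ha1 n
  have heq : fracCoeff α ((n:ℤ)+1) = (-1:ℝ)^n * (-1) * Real.Gamma (α+1) /
      (Real.Gamma (α/2 - n) * Real.Gamma (α/2 + n + 2)) := by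
    have h2 := fracCoeff_nat α (n+1)
    rw [show ((n+1:ℕ):ℤ) = (n:ℤ)+1 by push_cast; ring] at h2
    rw [h2, pow_succ]
    push_cast
    ring_nf
  rw [heq]
  have hG1 : 0 < Real.Gamma (α + 1) := Real.Gamma_pos_of_pos (by linarith)
  have hG2 : 0 < Real.Gamma (α/2 + n + 2) := Real.Gamma_pos_of_pos (by positivity)
  rcases Nat.even_or_odd n with h | h
  · have h1 : (-1:ℝ)^n = 1 := h.neg_one_pow
    rw [h1] at hkey ⊢
    rw [one_mul] at hkey
    apply div_neg_of_neg_of_pos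
    · nlinarith
    · exact mul_pos hkey hG2
  · have h1 : (-1:ℝ)^n = -1 := h.neg_one_pow
    rw [h1] at hkey ⊢
    have hneg : Real.Gamma (α/2 - n) < 0 := by nlinarith
    apply div_neg_of_pos_of_neg
    · nlinarith
    · nlinarith

lemma gamma_ne_zero_neg {α : ℝ} (hα1 : 1 < α) (hα2 : α < 2) (n : ℕ) :
    Real.Gamma (α/2 - n) ≠ 0 := by
  have hkey := gamma_sign (show (0:ℝ) < α/2 by linarith) (show α/2 < 1 by linarith) n
  intro h
  rw [h] at hkey
  simp at hkey

lemma partial_sum_eq {α : ℝ} (hα1 : 1 < α) (hα2 : α < 2) (N : ℕ) :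
    fracCoeff α 0 + 2 * ∑ k ∈ Finset.range N, fracCoeff α ((k : ℤ) + 1)
      = 2 * Real.Gamma α * (-1 : ℝ)^N / (Real.Gamma (α/2 + N + 1) * Real.Gamma (α/2 - N)) := by
  have hαne : α ≠ 0 := by linarith
  have hane : α / 2 ≠ 0 := by intro h; rw [div_eq_iff (by norm_num : (2:ℝ) ≠ 0)] at h; linarith
  have hGα : 0 < Real.Gamma α := Real.Gamma_pos_of_pos (by linarith)
  induction N with
  | zero =>
    simp only [Finset.range_zero, Finset.sum_empty, mul_zero, add_zero, pow_zero]
    have h0 : fracCoeff α 0 = Real.Gamma (α + 1) / (Real.Gamma (α / 2 + 1) * Real.Gamma (α / 2 + 1)) := by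
      unfold fracCoeff; norm_num
    rw [h0, Real.Gamma_add_one hαne, Real.Gamma_add_one hane]
    have hGa : 0 < Real.Gamma (α/2) := Real.Gamma_pos_of_pos (by linarith)
    push_cast
    rw [show α/2 + 0 + 1 = α/2 + 1 by ring, show α/2 - 0 = α/2 by ring,
      Real.Gamma_add_one hane]
    field_simp
  | succ N ih =>
    rw [Finset.sum_range_succ, mul_add, ← add_assoc, ih]
    push_cast
    have hG1 : 0 < Real.Gamma (α/2 + N + 1) := Real.Gamma_pos_of_pos (by positivity)
    have hg : Real.Gamma (α/2 - ((N:ℝ)+1)) ≠ 0 := by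
      have := gamma_ne_zero_neg hα1 hα2 (N+1); push_cast at this; exact this
    have hy : α/2 - ((N:ℝ)+1) ≠ 0 := by
      have : (0:ℝ) ≤ (N:ℝ) := Nat.cast_nonneg N
      intro h; nlinarith
    have hc : fracCoeff α ((N:ℤ)+1) = (-1:ℝ)^N * (-1) * (α * Real.Gamma α) /
        (Real.Gamma (α/2 - N) * Real.Gamma (α/2 + N + 2)) := by
      have h2 := fracCoeff_nat α (N+1)
      rw [show ((N+1:ℕ):ℤ) = (N:ℤ)+1 by push_cast; ring] at h2
      rw [h2, pow_succ, Real.Gamma_add_one hαne]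
      push_cast
      ring_nf
    have hr3 : Real.Gamma (α/2 + (N:ℝ) + 2) = (α/2 + N + 1) * Real.Gamma (α/2 + N + 1) := by
      rw [show α/2 + (N:ℝ) + 2 = (α/2 + N + 1) + 1 by ring,
        Real.Gamma_add_one (by positivity)]
    have hq1 : Real.Gamma (α/2 + ((N:ℝ)+1) + 1) = (α/2 + N + 1) * Real.Gamma (α/2 + N + 1) := by
      rw [show α/2 + ((N:ℝ)+1) + 1 = (α/2 + N + 1) + 1 by ring,
        Real.Gamma_add_one (by positivity)]
    have hr2 : Real.Gamma (α/2 - (N:ℝ)) = (α/2 - ((N:ℝ)+1)) * Real.Gamma (α/2 - ((N:ℝ)+1)) := by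
      rw [show α/2 - (N:ℝ) = (α/2 - ((N:ℝ)+1)) + 1 by ring, Real.Gamma_add_one hy]
    rw [hc, hr3, hr2, hq1, pow_succ]
    have hPne : Real.Gamma (α/2 + (N:ℝ) + 1) ≠ 0 := ne_of_gt hG1
    have hune : α/2 + (N:ℝ) + 1 ≠ 0 := by positivity
    rw [← mul_div_assoc]
    rw [div_add_div _ _ (by simp [hy, hg, hPne, hune]) (by simp [hy, hg, hPne, hune]),
      div_eq_div_iff (by simp [hy, hg, hPne, hune]) (by simp [hy, hg, hPne, hune])]
    ring

lemma partial_sum_pos {α : ℝ} (hα1 : 1 < α) (hα2 : α < 2) (N : ℕ) :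
    0 < fracCoeff α 0 + 2 * ∑ k ∈ Finset.range N, fracCoeff α ((k : ℤ) + 1) := by
  rw [partial_sum_eq hα1 hα2 N]
  have hGα : 0 < Real.Gamma α := Real.Gamma_pos_of_pos (by linarith)
  have hP : 0 < Real.Gamma (α/2 + N + 1) := Real.Gamma_pos_of_pos (by positivity)
  have hkey := gamma_sign (show (0:ℝ) < α/2 by linarith) (show α/2 < 1 by linarith) N
  rcases Nat.even_or_odd N with h | h
  · rw [h.neg_one_pow] at hkey ⊢
    rw [one_mul] at hkey
    apply div_pos (by linarith) (mul_pos hP hkey)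
  · rw [h.neg_one_pow] at hkey ⊢
    have hG2 : Real.Gamma (α/2 - N) < 0 := by nlinarith
    apply div_pos_of_neg_of_neg (by nlinarith) (by nlinarith)

lemma sum_Icc_erase_eq (c : ℤ → ℝ) (hsym : ∀ k, c (-k) = c k) (m : ℕ) :
    ∑ k ∈ (Finset.Icc (-(m:ℤ)) m).erase 0, c k
      = 2 * ∑ k ∈ Finset.range m, c ((k:ℤ) + 1) := by
  induction m with
  | zero => simp
  | succ m ih =>
    have hset : (Finset.Icc (-((m:ℤ)+1)) ((m:ℤ)+1)).erase 0
        = insert (-((m:ℤ)+1)) (insert ((m:ℤ)+1) ((Finset.Icc (-(m:ℤ)) m).erase 0)) := by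
      ext k
      simp only [Finset.mem_erase, Finset.mem_Icc, Finset.mem_insert]
      omega
    rw [show (((m+1:ℕ)):ℤ) = (m:ℤ)+1 by push_cast; ring, hset,
      Finset.sum_insert (by
        simp only [Finset.mem_insert, Finset.mem_erase, Finset.mem_Icc]
        omega),
      Finset.sum_insert (by
        simp only [Finset.mem_erase, Finset.mem_Icc]
        omega),
      ih, Finset.sum_range_succ, hsym ((m:ℤ)+1)]
    ring

lemma fracCoeff_neg_of_ne_zero {α : ℝ} (hα1 : 1 < α) (hα2 : α < 2) {k : ℤ} (hk : k ≠ 0) :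
    fracCoeff α k < 0 := by
  rcases lt_or_gt_of_ne hk with h | h
  · rw [show k = -(-k) by ring, fracCoeff_symm]
    have h1 : -k = ((-k-1).toNat : ℤ) + 1 := by omega
    rw [h1]
    exact fracCoeff_succ_neg hα1 hα2 _
  · have h1 : k = ((k-1).toNat : ℤ) + 1 := by omega
    rw [h1]
    exact fracCoeff_succ_neg hα1 hα2 _

lemma row_sum_bound {α : ℝ} (hα1 : 1 < α) (hα2 : α < 2) {n : ℕ} (i : Fin n) :
    (2:ℝ) * ∑ k ∈ Finset.range (n-1), fracCoeff α ((k:ℤ) + 1)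
      ≤ ∑ j ∈ Finset.univ.erase i, fracCoeff α ((i:ℤ) - (j:ℤ)) := by
  have hn : 1 ≤ n := i.pos
  have hcast : ((n-1:ℕ):ℤ) = (n:ℤ) - 1 := by omega
  rw [← sum_Icc_erase_eq (fracCoeff α) (fracCoeff_symm α) (n-1)]
  have himg : ∑ j ∈ Finset.univ.erase i, fracCoeff α ((i:ℤ) - (j:ℤ))
      = ∑ k ∈ (Finset.univ.erase i).image (fun j : Fin n => (i:ℤ) - (j:ℤ)), fracCoeff α k := by
    rw [Finset.sum_image]
    intro a _ b _ hab
    have hab' : ((i:ℕ):ℤ) - ((a:ℕ):ℤ) = ((i:ℕ):ℤ) - ((b:ℕ):ℤ) := hab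
    have : (a:ℤ) = (b:ℤ) := by omega
    exact Fin.ext (by exact_mod_cast this)
  rw [himg]
  have key : ∀ (s t : Finset ℤ), s ⊆ t → (∀ k ∈ t, k ∉ s → fracCoeff α k ≤ 0) →
      ∑ k ∈ t, fracCoeff α k ≤ ∑ k ∈ s, fracCoeff α k := by
    intro s t hst h
    have := Finset.sum_le_sum_of_subset_of_nonneg (f := fun k => -fracCoeff α k) hst
      (by intro k hk hks; simpa using h k hk hks)
    simp only [Finset.sum_neg_distrib, neg_le_neg_iff] at this
    exact this
  apply key
  · intro k hk
    simp only [Finset.mem_image, Finset.mem_erase, Finset.mem_Icc] at hk ⊢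
    obtain ⟨j, ⟨hji, -⟩, hjk⟩ := hk
    have hji' : (j:ℤ) ≠ (i:ℤ) := by
      intro h; exact hji (Fin.ext (by exact_mod_cast h))
    have h1 : (i:ℤ) < n := by exact_mod_cast i.isLt
    have h2 : (j:ℤ) < n := by exact_mod_cast j.isLt
    have h3 : (0:ℤ) ≤ (i:ℤ) := Int.ofNat_nonneg _
    have h4 : (0:ℤ) ≤ (j:ℤ) := Int.ofNat_nonneg _
    constructor
    · omega
    · rw [hcast]; omega
  · intro k hk _
    simp only [Finset.mem_erase] at hk
    exact (fracCoeff_neg_of_ne_zero hα1 hα2 hk.1).le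

lemma quad_pos {α : ℝ} (hα1 : 1 < α) (hα2 : α < 2) {n : ℕ} (x : Fin n → ℝ) (hx : x ≠ 0) :
    0 < ∑ i : Fin n, ∑ j : Fin n, x i * (fracCoeff α ((i:ℤ) - (j:ℤ)) * x j) := by
  set c : ℤ → ℝ := fracCoeff α with hc
  set T : ℝ := fracCoeff α 0 + 2 * ∑ k ∈ Finset.range (n-1), fracCoeff α ((k:ℤ) + 1) with hT
  have hTpos : 0 < T := partial_sum_pos hα1 hα2 (n-1)
  -- pointwise bound
  have hpt : ∀ i j : Fin n,
      c ((i:ℤ)-(j:ℤ)) * (x i)^2 / 2 + c ((i:ℤ)-(j:ℤ)) * (x j)^2 / 2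
        ≤ x i * (c ((i:ℤ)-(j:ℤ)) * x j) := by
    intro i j
    by_cases hij : i = j
    · subst hij
      simp only [sub_self]
      ring_nf
      nlinarith [sq_nonneg (x i)]
    · have hk : (i:ℤ) - (j:ℤ) ≠ 0 := by
        intro h
        exact hij (Fin.ext (by omega))
      have hneg : c ((i:ℤ)-(j:ℤ)) < 0 := fracCoeff_neg_of_ne_zero hα1 hα2 hk
      nlinarith [sq_nonneg (x i - x j), hneg]
  -- swap lemma
  have hswap : (∑ i : Fin n, ∑ j : Fin n, c ((i:ℤ)-(j:ℤ)) * (x j)^2 / 2)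
      = ∑ i : Fin n, ∑ j : Fin n, c ((i:ℤ)-(j:ℤ)) * (x i)^2 / 2 := by
    rw [Finset.sum_comm]
    refine Finset.sum_congr rfl fun i _ => Finset.sum_congr rfl fun j _ => ?_
    rw [show (j:ℤ)-(i:ℤ) = -((i:ℤ)-(j:ℤ)) by ring, hc, fracCoeff_symm]
  -- step 1 : lower bound by sum with squares
  have h1 : (∑ i : Fin n, ∑ j : Fin n, (c ((i:ℤ)-(j:ℤ)) * (x i)^2 / 2 + c ((i:ℤ)-(j:ℤ)) * (x j)^2 / 2))
      ≤ ∑ i : Fin n, ∑ j : Fin n, x i * (c ((i:ℤ)-(j:ℤ)) * x j) :=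
    Finset.sum_le_sum fun i _ => Finset.sum_le_sum fun j _ => hpt i j
  -- step 2 : identify with row-sums
  have h2 : (∑ i : Fin n, ∑ j : Fin n, (c ((i:ℤ)-(j:ℤ)) * (x i)^2 / 2 + c ((i:ℤ)-(j:ℤ)) * (x j)^2 / 2))
      = ∑ i : Fin n, (x i)^2 * ∑ j : Fin n, c ((i:ℤ)-(j:ℤ)) := by
    simp only [Finset.sum_add_distrib]
    rw [hswap, ← two_mul]
    rw [Finset.mul_sum]
    refine Finset.sum_congr rfl fun i _ => ?_
    rw [Finset.mul_sum, Finset.mul_sum]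
    refine Finset.sum_congr rfl fun j _ => ?_
    ring
  -- step 3 : row sums are at least T
  have h3 : ∀ i : Fin n, T ≤ ∑ j : Fin n, c ((i:ℤ)-(j:ℤ)) := by
    intro i
    have := row_sum_bound hα1 hα2 (n := n) i
    have hsplit : ∑ j : Fin n, c ((i:ℤ)-(j:ℤ))
        = c ((i:ℤ)-(i:ℤ)) + ∑ j ∈ Finset.univ.erase i, c ((i:ℤ)-(j:ℤ)) :=
      (Finset.add_sum_erase _ _ (Finset.mem_univ i)).symm
    rw [hsplit, sub_self]
    rw [hT]
    exact add_le_add (le_refl _) this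
  have h4 : T * ∑ i : Fin n, (x i)^2 ≤ ∑ i : Fin n, (x i)^2 * ∑ j : Fin n, c ((i:ℤ)-(j:ℤ)) := by
    rw [Finset.mul_sum]
    refine Finset.sum_le_sum fun i _ => ?_
    rw [mul_comm T _]
    exact mul_le_mul_of_nonneg_left (h3 i) (sq_nonneg _)
  have h5 : 0 < ∑ i : Fin n, (x i)^2 := by
    obtain ⟨i0, hi0⟩ := Function.ne_iff.mp hx
    have hi0' : 0 < (x i0)^2 := by
      have : x i0 ≠ 0 := by simpa using hi0
      positivity
    exact Finset.sum_pos' (fun i _ => sq_nonneg _) ⟨i0, Finset.mem_univ _, hi0'⟩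
  calc 0 < T * ∑ i : Fin n, (x i)^2 := mul_pos hTpos h5
    _ ≤ _ := le_trans h4 (le_of_eq h2.symm)
    _ ≤ _ := h1

lemma gamma_two' : Real.Gamma 2 = 1 := by
  rw [show (2:ℝ) = 1+1 by norm_num, Real.Gamma_add_one (by norm_num), Real.Gamma_one]
  norm_num

lemma gamma_three' : Real.Gamma 3 = 2 := by
  rw [show (3:ℝ) = 2+1 by norm_num, Real.Gamma_add_one (by norm_num), gamma_two']
  norm_num

lemma fracCoeff_two_zero : fracCoeff 2 0 = 2 := by
  unfold fracCoeff
  norm_num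

lemma fracCoeff_two_one : fracCoeff 2 1 = -1 := by
  unfold fracCoeff
  norm_num

lemma fracCoeff_two_big {k : ℤ} (hk : 2 ≤ k) : fracCoeff 2 k = 0 := by
  unfold fracCoeff
  have : (2:ℝ)/2 - k + 1 = -(((k - 2).toNat : ℕ) : ℝ) := by
    have : ((k-2).toNat : ℤ) = k - 2 := by omega
    have h2 : (((k-2).toNat : ℕ) : ℝ) = (k : ℝ) - 2 := by exact_mod_cast congrArg (Int.cast : ℤ → ℝ) this
    rw [h2]; ring
  rw [this, Real.Gamma_neg_nat_eq_zero]
  simp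

lemma fracCoeff_two_abs_big {k : ℤ} (hk : 2 ≤ |k|) : fracCoeff 2 k = 0 := by
  rcases abs_le.mp (le_refl |k|) with _
  rcases le_or_gt 2 k with h | h
  · exact fracCoeff_two_big h
  · have h2 : 2 ≤ -k := by
      rcases abs_cases k with ⟨h1, _⟩ | ⟨h1, _⟩ <;> omega
    rw [show k = -(-k) by ring, fracCoeff_symm]
    exact fracCoeff_two_big h2

lemma tri_identity (z : ℕ → ℝ) (n : ℕ) (hn : 1 ≤ n) :
    ∑ i ∈ Finset.range n, ∑ j ∈ Finset.range n, z i * (fracCoeff 2 ((i:ℤ)-(j:ℤ)) * z j)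
      = (z 0)^2 + (z (n-1))^2 + ∑ i ∈ Finset.range (n-1), (z i - z (i+1))^2 := by
  induction n, hn using Nat.le_induction with
  | base =>
    simp only [Finset.sum_range_one, Nat.sub_self, Finset.range_zero, Finset.sum_empty]
    rw [show ((0:ℕ):ℤ) - ((0:ℕ):ℤ) = 0 by norm_num, fracCoeff_two_zero]
    ring
  | succ n hn ih =>
    have hsplit : ∀ g : ℕ → ℝ, ∑ j ∈ Finset.range n, g j
        = ∑ j ∈ Finset.range (n-1), g j + g (n-1) := by
      intro g
      conv_rhs => rw [← Finset.sum_range_succ]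
      rw [Nat.sub_add_cancel hn]
    have hzero1 : ∑ j ∈ Finset.range (n-1), z j * (fracCoeff 2 ((j:ℤ)-(n:ℤ)) * z n) = 0 := by
      apply Finset.sum_eq_zero; intro j hj
      rw [Finset.mem_range] at hj
      rw [fracCoeff_two_abs_big (by
        rcases abs_cases ((j:ℤ)-(n:ℤ)) with ⟨h,_⟩ | ⟨h,_⟩ <;> omega)]
      ring
    have hzero2 : ∑ j ∈ Finset.range (n-1), z n * (fracCoeff 2 ((n:ℤ)-(j:ℤ)) * z j) = 0 := by
      apply Finset.sum_eq_zero; intro j hj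
      rw [Finset.mem_range] at hj
      rw [fracCoeff_two_abs_big (by
        rcases abs_cases ((n:ℤ)-(j:ℤ)) with ⟨h,_⟩ | ⟨h,_⟩ <;> omega)]
      ring
    have hlast1 : fracCoeff 2 (((n-1:ℕ):ℤ) - (n:ℤ)) = -1 := by
      rw [show ((n-1:ℕ):ℤ) - (n:ℤ) = -(1:ℤ) by rw [Nat.cast_sub hn]; push_cast; ring,
        fracCoeff_symm, fracCoeff_two_one]
    have hlast2 : fracCoeff 2 ((n:ℤ) - ((n-1:ℕ):ℤ)) = -1 := by
      rw [show (n:ℤ) - ((n-1:ℕ):ℤ) = (1:ℤ) by rw [Nat.cast_sub hn]; push_cast; ring,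
        fracCoeff_two_one]
    rw [Finset.sum_range_succ]
    simp only [Finset.sum_range_succ]
    rw [Finset.sum_add_distrib, ih,
      hsplit (fun j => z j * (fracCoeff 2 ((j:ℤ)-(n:ℤ)) * z n)), hzero1,
      hsplit (fun j => z n * (fracCoeff 2 ((n:ℤ)-(j:ℤ)) * z j)), hzero2,
      hlast1, hlast2,
      show ((n:ℕ):ℤ) - ((n:ℕ):ℤ) = 0 by ring, fracCoeff_two_zero,
      Nat.add_sub_cancel,
      hsplit (fun i => (z i - z (i+1))^2),
      show n - 1 + 1 = n by omega]
    ring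

lemma quad_pos_two {n : ℕ} (x : Fin n → ℝ) (hx : x ≠ 0) :
    0 < ∑ i : Fin n, ∑ j : Fin n, x i * (fracCoeff 2 ((i:ℤ) - (j:ℤ)) * x j) := by
  have hn : 1 ≤ n := by
    rcases Nat.eq_zero_or_pos n with h | h
    · exfalso; apply hx; subst h
      funext i; exact absurd i.isLt (by omega)
    · exact h
  set z : ℕ → ℝ := fun m => if h : m < n then x ⟨m, h⟩ else 0 with hzdef
  have hz : ∀ i : Fin n, z i = x i := fun i => dif_pos i.isLt
  have hconv : ∑ i : Fin n, ∑ j : Fin n, x i * (fracCoeff 2 ((i:ℤ) - (j:ℤ)) * x j)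
      = ∑ i ∈ Finset.range n, ∑ j ∈ Finset.range n, z i * (fracCoeff 2 ((i:ℤ)-(j:ℤ)) * z j) := by
    rw [← Fin.sum_univ_eq_sum_range
      (fun m => ∑ j ∈ Finset.range n, z m * (fracCoeff 2 ((m:ℤ)-(j:ℤ)) * z j)) n]
    refine Finset.sum_congr rfl fun i _ => ?_
    rw [← Fin.sum_univ_eq_sum_range (fun m => z i * (fracCoeff 2 (((i:ℕ):ℤ)-(m:ℤ)) * z m)) n]
    refine Finset.sum_congr rfl fun j _ => ?_
    rw [hz i, hz j]
  rw [hconv, tri_identity z n hn]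
  have hex : ∃ m, z m ≠ 0 := by
    obtain ⟨i0, hi0⟩ := Function.ne_iff.mp hx
    exact ⟨i0, by rw [hz i0]; simpa using hi0⟩
  have hS : 0 ≤ ∑ i ∈ Finset.range (n-1), (z i - z (i+1))^2 :=
    Finset.sum_nonneg fun i _ => sq_nonneg _
  obtain ⟨m0, hm0, hmin⟩ : ∃ m0, z m0 ≠ 0 ∧ ∀ k, k < m0 → z k = 0 := by
    refine ⟨Nat.find hex, Nat.find_spec hex, fun k hk => ?_⟩
    by_contra h
    exact Nat.find_min hex hk h
  have hm0n : m0 < n := by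
    by_contra h
    exact hm0 (dif_neg (by omega))
  rcases Nat.eq_zero_or_pos m0 with h0 | h0
  · have : 0 < (z 0)^2 := by rw [← h0]; positivity
    nlinarith [sq_nonneg (z (n-1))]
  · obtain ⟨k, hk⟩ : ∃ k, m0 = k + 1 := ⟨m0 - 1, by omega⟩
    have hzk : z k = 0 := hmin k (by omega)
    have hne : z (k+1) ≠ 0 := by rw [← hk]; exact hm0
    have hterm : (z k - z (k+1))^2 ≤ ∑ i ∈ Finset.range (n-1), (z i - z (i+1))^2 :=
      Finset.single_le_sum (fun i _ => sq_nonneg (z i - z (i+1)))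
        (Finset.mem_range.mpr (by omega))
    have hpos : 0 < (z k - z (k+1))^2 := by
      rw [hzk, zero_sub, neg_sq]
      exact sq_pos_of_ne_zero hne
    nlinarith [sq_nonneg (z 0), sq_nonneg (z (n-1))]

theorem stmt2 (α : ℝ) (hα1 : 1 < α) (hα2 : α ≤ 2) (M : ℕ) (hM : 2 ≤ M)
    (Cm : Matrix (Fin (M - 1)) (Fin (M - 1)) ℝ)
    (hC : ∀ i j, Cm i j = fracCoeff α ((i : ℤ) - (j : ℤ))) :
    Cm.IsSymm ∧ Cm.PosDef := by
  have hsym : Cm.IsSymm := by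
    ext i j
    rw [Matrix.transpose_apply, hC, hC,
      show (i:ℤ) - (j:ℤ) = -((j:ℤ) - (i:ℤ)) by ring, fracCoeff_symm]
  refine ⟨hsym, Matrix.posDef_iff_dotProduct_mulVec.mpr ⟨?_, ?_⟩⟩
  · rw [Matrix.IsHermitian, Matrix.conjTranspose_eq_transpose_of_trivial]
    exact hsym
  · intro x hx
    have hdp : dotProduct (star x) (Cm.mulVec x)
        = ∑ i : Fin (M-1), ∑ j : Fin (M-1), x i * (fracCoeff α ((i:ℤ) - (j:ℤ)) * x j) := by
      simp only [dotProduct, Matrix.mulVec, star_trivial, hC, Finset.mul_sum]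
    rw [hdp]
    rcases lt_or_eq_of_le hα2 with h | h
    · exact quad_pos hα1 h x hx
    · subst h
      exact quad_pos_two x hx
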